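/- Given a partial triangle packing P with p₁ triangle-components and p₂ edge-components (p₁ + p₂ ≤ n/3) in a metric complete graph on n vertices (3 | n), there exists a perfect triangle packing T with w(T) ≥ Σ_{t∈P} w(t) + Σ_{e∈P} 2·w(e). -/

import Mathlib

def tVerts {V : Type} [DecidableEq V] (t : V × V × V) : Finset V :=
  {t.1, t.2.1, t.2.2}

def IsPerfectTrianglePacking {V : Type} [Fintype V] [DecidableEq V]
    (B : Finset (V × V × V)) : Prop :=
  (∀ t ∈ B, t.1 ≠ t.2.1 ∧ t.1 ≠ t.2.2 ∧ t.2.1 ≠ t.2.2) ∧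
  (∀ t ∈ B, ∀ t' ∈ B, t ≠ t' → Disjoint (tVerts t) (tVerts t')) ∧
  (∀ v : V, ∃ t ∈ B, v ∈ tVerts t)

def triW {V : Type} (w : V → V → ℝ) (t : V × V × V) : ℝ :=
  w t.1 t.2.1 + w t.1 t.2.2 + w t.2.1 t.2.2

lemma card_tVerts {V : Type} [DecidableEq V] {t : V × V × V}
    (h : t.1 ≠ t.2.1 ∧ t.1 ≠ t.2.2 ∧ t.2.1 ≠ t.2.2) : (tVerts t).card = 3 :=
  Finset.card_eq_three.mpr ⟨t.1, t.2.1, t.2.2, h.1, h.2.1, h.2.2, rfl⟩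

lemma aux_term {V : Type} [Fintype V] [DecidableEq V]
    (w : V → V → ℝ)
    (n : ℕ) (hn : n = Fintype.card V) (h3 : 3 ∣ n)
    (PT : Finset (V × V × V)) (PE : Finset (V × V))
    (hPT : ∀ t ∈ PT, t.1 ≠ t.2.1 ∧ t.1 ≠ t.2.2 ∧ t.2.1 ≠ t.2.2)
    (hdisj1 : ∀ t ∈ PT, ∀ t' ∈ PT, t ≠ t' → Disjoint (tVerts t) (tVerts t'))
    (hcount : PT.card + PE.card ≤ n / 3)
    (hfull : n / 3 ≤ PT.card) :
    ∃ T : Finset (V × V × V), IsPerfectTrianglePacking T ∧ T.card = n / 3 ∧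
      (∑ t ∈ PT, triW w t) + (∑ e ∈ PE, 2 * w e.1 e.2) ≤ ∑ t ∈ T, triW w t := by
  have hPE0 : PE = ∅ := Finset.card_eq_zero.mp (by omega)
  have hcard : PT.card = n / 3 := by omega
  have h33 : 3 * (n / 3) = n := Nat.mul_div_cancel' h3
  refine ⟨PT, ⟨hPT, hdisj1, ?_⟩, hcard, by simp [hPE0]⟩
  have hbu : PT.biUnion tVerts = Finset.univ := by
    apply Finset.eq_univ_of_card
    rw [Finset.card_biUnion hdisj1,
        Finset.sum_congr rfl (fun t ht => card_tVerts (hPT t ht)),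
        Finset.sum_const, smul_eq_mul, hcard]
    omega
  intro v
  exact Finset.mem_biUnion.mp (hbu ▸ Finset.mem_univ v)

lemma aux_main {V : Type} [Fintype V] [DecidableEq V]
    (w : V → V → ℝ)
    (hsymm : ∀ x y, w x y = w y x) (hnonneg : ∀ x y, 0 ≤ w x y)
    (htri : ∀ x y z, w x z ≤ w x y + w y z)
    (n : ℕ) (hn : n = Fintype.card V) (h3 : 3 ∣ n) (k : ℕ) :
    ∀ (PT : Finset (V × V × V)) (PE : Finset (V × V)),
    n / 3 ≤ PT.card + k →
    (∀ t ∈ PT, t.1 ≠ t.2.1 ∧ t.1 ≠ t.2.2 ∧ t.2.1 ≠ t.2.2) →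
    (∀ e ∈ PE, e.1 ≠ e.2) →
    (∀ t ∈ PT, ∀ t' ∈ PT, t ≠ t' → Disjoint (tVerts t) (tVerts t')) →
    (∀ e ∈ PE, ∀ f ∈ PE, e ≠ f →
      Disjoint ({e.1, e.2} : Finset V) {f.1, f.2}) →
    (∀ t ∈ PT, ∀ e ∈ PE, Disjoint (tVerts t) ({e.1, e.2} : Finset V)) →
    PT.card + PE.card ≤ n / 3 →
    ∃ T : Finset (V × V × V), IsPerfectTrianglePacking T ∧ T.card = n / 3 ∧
      (∑ t ∈ PT, triW w t) + (∑ e ∈ PE, 2 * w e.1 e.2) ≤ ∑ t ∈ T, triW w t := by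
  induction k with
  | zero =>
    intro PT PE hk hPT hPE hdisj1 hdisj2 hdisj3 hcount
    exact aux_term w n hn h3 PT PE hPT hdisj1 hcount (by omega)
  | succ k ih =>
    intro PT PE hk hPT hPE hdisj1 hdisj2 hdisj3 hcount
    by_cases hfull : n / 3 ≤ PT.card
    · exact aux_term w n hn h3 PT PE hPT hdisj1 hcount hfull
    push_neg at hfull
    have h33 : 3 * (n / 3) = n := Nat.mul_div_cancel' h3
    -- the set of used vertices
    set U : Finset V := PT.biUnion tVerts ∪ PE.biUnion (fun e => ({e.1, e.2} : Finset V)) with hU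
    have hUcard : U.card ≤ 3 * PT.card + 2 * PE.card := by
      calc U.card ≤ (PT.biUnion tVerts).card
            + (PE.biUnion (fun e => ({e.1, e.2} : Finset V))).card := Finset.card_union_le _ _
        _ ≤ (∑ t ∈ PT, (tVerts t).card) + (∑ e ∈ PE, ({e.1, e.2} : Finset V).card) :=
            add_le_add (Finset.card_biUnion_le) (Finset.card_biUnion_le)
        _ ≤ 3 * PT.card + 2 * PE.card := by
            rw [Finset.sum_congr rfl (fun t ht => card_tVerts (hPT t ht)), Finset.sum_const]
            have : (∑ e ∈ PE, ({e.1, e.2} : Finset V).card) ≤ ∑ _e ∈ PE, 2 :=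
              Finset.sum_le_sum (fun e _ => Finset.card_insert_le _ _ |>.trans (by simp))
            simp only [smul_eq_mul, Finset.sum_const] at *
            omega
    have hmemU : ∀ x, x ∉ U → (∀ t ∈ PT, x ∉ tVerts t) ∧ (∀ f ∈ PE, x ≠ f.1 ∧ x ≠ f.2) := by
      intro x hx
      constructor
      · intro t ht hmem
        exact hx (Finset.mem_union_left _ (Finset.mem_biUnion.mpr ⟨t, ht, hmem⟩))
      · intro f hf
        constructor <;> rintro rfl <;>
          exact hx (Finset.mem_union_right _ (Finset.mem_biUnion.mpr ⟨f, hf, by simp⟩))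
    rcases Finset.eq_empty_or_nonempty PE with hPEe | ⟨e, he⟩
    · -- PE empty : add an arbitrary triangle of three unused vertices
      subst hPEe
      have hcompl : 3 ≤ Uᶜ.card := by
        rw [Finset.card_compl]
        simp only [Finset.sum_empty, Finset.card_empty] at *
        omega
      obtain ⟨s, hs, hs3⟩ := Finset.exists_subset_card_eq hcompl
      obtain ⟨a, b, c, hab, hac, hbc, rfl⟩ := Finset.card_eq_three.mp hs3
      have ha := (hmemU a (by simpa using Finset.mem_compl.mp (hs (by simp)))).1
      have hb := (hmemU b (by simpa using Finset.mem_compl.mp (hs (by simp)))).1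
      have hc := (hmemU c (by simpa using Finset.mem_compl.mp (hs (by simp)))).1
      set t0 : V × V × V := (a, b, c) with ht0
      have ht0n : t0 ∉ PT := fun h => ha t0 h (by simp [tVerts, ht0])
      have hstep := ih (insert t0 PT) ∅
        (by rw [Finset.card_insert_of_notMem ht0n]; omega)
        (by rintro t ht
            rcases Finset.mem_insert.mp ht with rfl | ht
            · exact ⟨hab, hac, hbc⟩
            · exact hPT t ht)
        (by simp)
        (by have key : ∀ s ∈ PT, Disjoint (tVerts t0) (tVerts s) := by
              intro s hsm
              rw [Finset.disjoint_left]
              intro x hx hx'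
              simp only [tVerts, ht0, Finset.mem_insert, Finset.mem_singleton] at hx
              rcases hx with rfl | rfl | rfl
              · exact ha s hsm hx'
              · exact hb s hsm hx'
              · exact hc s hsm hx'
            rintro t ht t' ht' hne
            rcases Finset.mem_insert.mp ht with rfl | ht
            · rcases Finset.mem_insert.mp ht' with rfl | ht'
              · exact absurd rfl hne
              · exact key t' ht'
            · rcases Finset.mem_insert.mp ht' with rfl | ht'
              · exact (key t ht).symm
              · exact hdisj1 t ht t' ht' hne)
        (by simp)
        (by simp)
        (by rw [Finset.card_insert_of_notMem ht0n]; simp only [Finset.card_empty] at *; omega)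
      obtain ⟨T, hT, hTcard, hTsum⟩ := hstep
      refine ⟨T, hT, hTcard, ?_⟩
      rw [Finset.sum_insert ht0n] at hTsum
      have : 0 ≤ triW w t0 := by
        have h1 := hnonneg a b; have h2 := hnonneg a c; have h3' := hnonneg b c
        simp only [triW, ht0]
        linarith
      simp only [Finset.sum_empty] at hTsum ⊢
      linarith
    · -- PE nonempty : complete edge e with an unused vertex
      have hcompl : 1 ≤ Uᶜ.card := by
        rw [Finset.card_compl]
        have := Finset.card_pos.mpr ⟨e, he⟩
        omega
      obtain ⟨z, hz⟩ := Finset.card_pos.mp hcompl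
      have hz' := hmemU z (Finset.mem_compl.mp hz)
      have hze := hz'.2 e he
      set t0 : V × V × V := (e.1, e.2, z) with ht0
      have ht0n : t0 ∉ PT := fun h => hz'.1 t0 h (by simp [tVerts, ht0])
      have htv0 : tVerts t0 = {e.1, e.2, z} := rfl
      have hstep := ih (insert t0 PT) (PE.erase e)
        (by rw [Finset.card_insert_of_notMem ht0n]; omega)
        (by rintro t ht
            rcases Finset.mem_insert.mp ht with rfl | ht
            · exact ⟨hPE e he, (hze.1).symm, (hze.2).symm⟩
            · exact hPT t ht)
        (fun f hf => hPE f (Finset.mem_of_mem_erase hf))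
        (by rintro t ht t' ht' hne
            have key : ∀ t' ∈ PT, Disjoint (tVerts t0) (tVerts t') := by
              intro s hsm
              rw [Finset.disjoint_left]
              intro x hx hx'
              rw [htv0] at hx
              simp only [Finset.mem_insert, Finset.mem_singleton] at hx
              rcases hx with rfl | rfl | rfl
              · exact Finset.disjoint_right.mp (hdisj3 s hsm e he) (by simp) hx'
              · exact Finset.disjoint_right.mp (hdisj3 s hsm e he) (by simp) hx'
              · exact hz'.1 s hsm hx'
            rcases Finset.mem_insert.mp ht with rfl | ht <;>
              rcases Finset.mem_insert.mp ht' with rfl | ht'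
            · exact absurd rfl hne
            · exact key t' ht'
            · exact (key t ht).symm
            · exact hdisj1 t ht t' ht' hne)
        (fun f hf g hg hne => hdisj2 f (Finset.mem_of_mem_erase hf)
            g (Finset.mem_of_mem_erase hg) hne)
        (by rintro t ht f hf
            have hfe : f ≠ e := Finset.ne_of_mem_erase hf
            have hfPE := Finset.mem_of_mem_erase hf
            rcases Finset.mem_insert.mp ht with rfl | ht
            · rw [htv0, Finset.disjoint_left]
              intro x hx hx'
              simp only [Finset.mem_insert, Finset.mem_singleton] at hx
              rcases hx with rfl | rfl | rfl
              · exact Finset.disjoint_left.mp (hdisj2 e he f hfPE (Ne.symm hfe)) (by simp) hx'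
              · exact Finset.disjoint_left.mp (hdisj2 e he f hfPE (Ne.symm hfe)) (by simp) hx'
              · have := hz'.2 f hfPE
                simp only [Finset.mem_insert, Finset.mem_singleton] at hx'
                rcases hx' with rfl | rfl
                · exact this.1 rfl
                · exact this.2 rfl
            · exact hdisj3 t ht f hfPE)
        (by rw [Finset.card_insert_of_notMem ht0n, Finset.card_erase_of_mem he]
            have := Finset.card_pos.mpr ⟨e, he⟩
            omega)
      obtain ⟨T, hT, hTcard, hTsum⟩ := hstep
      refine ⟨T, hT, hTcard, ?_⟩
      rw [Finset.sum_insert ht0n] at hTsum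
      have hsplit : (∑ f ∈ PE, 2 * w f.1 f.2)
          = 2 * w e.1 e.2 + ∑ f ∈ PE.erase e, 2 * w f.1 f.2 :=
        (Finset.add_sum_erase _ _ he).symm
      have htw : 2 * w e.1 e.2 ≤ triW w t0 := by
        simp only [triW, ht0]
        have h1 := htri e.1 z e.2
        have h2 := hsymm z e.2
        linarith
      linarith

theorem stmt7 {V : Type} [Fintype V] [DecidableEq V]
    (w : V → V → ℝ)
    (hsymm : ∀ x y, w x y = w y x) (hnonneg : ∀ x y, 0 ≤ w x y)
    (htri : ∀ x y z, w x z ≤ w x y + w y z)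
    (n : ℕ) (hn : n = Fintype.card V) (h3 : 3 ∣ n)
    (PT : Finset (V × V × V)) (PE : Finset (V × V))
    (hPT : ∀ t ∈ PT, t.1 ≠ t.2.1 ∧ t.1 ≠ t.2.2 ∧ t.2.1 ≠ t.2.2)
    (hPE : ∀ e ∈ PE, e.1 ≠ e.2)
    (hdisj1 : ∀ t ∈ PT, ∀ t' ∈ PT, t ≠ t' → Disjoint (tVerts t) (tVerts t'))
    (hdisj2 : ∀ e ∈ PE, ∀ f ∈ PE, e ≠ f →
      Disjoint ({e.1, e.2} : Finset V) {f.1, f.2})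
    (hdisj3 : ∀ t ∈ PT, ∀ e ∈ PE, Disjoint (tVerts t) ({e.1, e.2} : Finset V))
    (hcount : PT.card + PE.card ≤ n / 3) :
    ∃ T : Finset (V × V × V), IsPerfectTrianglePacking T ∧ T.card = n / 3 ∧
      (∑ t ∈ PT, triW w t) + (∑ e ∈ PE, 2 * w e.1 e.2) ≤ ∑ t ∈ T, triW w t := by
  exact aux_main w hsymm hnonneg htri n hn h3 (n / 3) PT PE (by omega)
    hPT hPE hdisj1 hdisj2 hdisj3 hcount
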